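/- For |x| < 1 (real x) and every natural number n, \sum_{k=1}^{\infty} \zeta(k+1) (k+1)^n x^k = -(\psi(1-x) + \gamma) + \sum_{k=1}^{n} S(n+1,k+1) * k! * \zeta(k+1, 1-x) * x^k, where \psi is the digamma function, \gamma is Euler's constant, \zeta(s) the Riemann zeta function, and \zeta(s,a) the Hurwitz zeta function. -/

import Mathlib

/-- Stirling numbers of the second kind. -/
def stirling2 : ℕ → ℕ → ℕ
  | 0, 0 => 1
  | 0, _ + 1 => 0
  | _ + 1, 0 => 0
  | n + 1, k + 1 => stirling2 n k + (k + 1) * stirling2 n (k + 1)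

/-- The Riemann zeta function at a natural number argument, `ζ(s) = ∑_{m≥1} 1/m^s`. -/
noncomputable def zetaNat (s : ℕ) : ℝ := ∑' m : ℕ, 1 / ((m : ℝ) + 1) ^ s

/-- The Hurwitz zeta function at a natural number argument, `ζ(s,a) = ∑_{m≥0} (m+a)^{-s}`. -/
noncomputable def hurwitzZetaNat (s : ℕ) (a : ℝ) : ℝ := ∑' m : ℕ, 1 / ((m : ℝ) + a) ^ s

/-- The digamma function `ψ = Γ'/Γ`. -/
noncomputable def digamma (x : ℝ) : ℝ := deriv Real.Gamma x / Real.Gamma x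



lemma stirling2_gt : ∀ n k : ℕ, n < k → stirling2 n k = 0
  | 0, k + 1, _ => rfl
  | m + 1, k + 1, h => by
    have h1 : m < k := Nat.lt_of_succ_lt_succ h
    simp [stirling2, stirling2_gt m k h1, stirling2_gt m (k+1) (Nat.lt_succ_of_lt h1)]

lemma stirling2_self : ∀ n, stirling2 n n = 1
  | 0 => rfl
  | n + 1 => by
    simp [stirling2, stirling2_self n, stirling2_gt n (n+1) (Nat.lt_succ_self n)]

lemma stirling2_one (n : ℕ) : stirling2 (n + 1) 1 = 1 := by
  induction n with
  | zero => rfl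
  | succ m ih => simpa [stirling2] using ih

/-- `(j+1)^n = ∑_{k=0}^{n} S(n+1,k+1) k! C(j,k)` -/
lemma pow_eq_sum_stirling (n j : ℕ) :
    (j + 1) ^ n = ∑ k ∈ Finset.range (n + 1), stirling2 (n + 1) (k + 1) * k.factorial * j.choose k := by
  induction n with
  | zero => simp [stirling2_one 0]
  | succ n ih =>
    have key : ∀ k, (j + 1) * j.choose k = (k + 1) * j.choose k + (k + 1) * j.choose (k + 1) := by
      intro k
      have h := Nat.add_one_mul_choose_eq j k
      rw [Nat.choose_succ_succ] at h
      simp only [Nat.succ_eq_add_one] at h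
      rw [h]; ring
    calc (j + 1) ^ (n + 1) = (j + 1) * (j + 1) ^ n := by ring
      _ = ∑ k ∈ Finset.range (n + 1), stirling2 (n + 1) (k + 1) * k.factorial * ((j + 1) * j.choose k) := by
          rw [ih, Finset.mul_sum]; exact Finset.sum_congr rfl fun k _ => by ring
      _ = ∑ k ∈ Finset.range (n + 1), (stirling2 (n + 1) (k + 1) * k.factorial * ((k+1) * j.choose k)
            + stirling2 (n + 1) (k + 1) * k.factorial * ((k+1) * j.choose (k + 1))) := by
          exact Finset.sum_congr rfl fun k _ => by rw [key k, Nat.mul_add]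
      _ = (∑ k ∈ Finset.range (n + 1), stirling2 (n + 1) (k + 1) * ((k+1) * k.factorial) * j.choose k)
            + ∑ k ∈ Finset.range (n + 1), stirling2 (n + 1) (k + 1) * ((k+1) * k.factorial) * j.choose (k + 1) := by
          rw [← Finset.sum_add_distrib]; exact Finset.sum_congr rfl fun k _ => by ring
      _ = ∑ k ∈ Finset.range (n + 2), stirling2 (n + 2) (k + 1) * k.factorial * j.choose k := by
          have e1 : (∑ k ∈ Finset.range (n + 2), stirling2 (n + 1) (k + 1) * ((k+1) * k.factorial) * j.choose k)
              = ∑ k ∈ Finset.range (n + 1), stirling2 (n + 1) (k + 1) * ((k+1) * k.factorial) * j.choose k := by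
            rw [Finset.sum_range_succ, stirling2_gt (n+1) (n+2) (by omega)]
            simp
          have e2 : (∑ k ∈ Finset.range (n + 1), stirling2 (n + 1) (k + 1) * ((k+1) * k.factorial) * j.choose (k + 1))
              = ∑ k ∈ Finset.range (n + 2), (if k = 0 then 0 else stirling2 (n + 1) k * (k * (k-1).factorial) * j.choose k) := by
            rw [Finset.sum_range_succ' (fun k => if k = 0 then 0 else stirling2 (n + 1) k * (k * (k-1).factorial) * j.choose k) (n+1)]
            simp
          rw [e2, ← e1, ← Finset.sum_add_distrib]
          refine Finset.sum_congr rfl fun k _ => ?_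
          match k with
          | 0 => simp [stirling2]
          | k + 1 =>
            simp only [if_neg (Nat.succ_ne_zero k), Nat.add_sub_cancel]
            show stirling2 (n + 1) (k + 2) * ((k + 2) * (k+1).factorial) * j.choose (k+1)
                + stirling2 (n + 1) (k + 1) * ((k + 1) * k.factorial) * j.choose (k+1)
                = stirling2 (n + 2) (k + 2) * (k+1).factorial * j.choose (k+1)
            have : stirling2 (n + 2) (k + 2) = stirling2 (n+1) (k+1) + (k + 2) * stirling2 (n+1) (k+2) := rfl
            rw [this, Nat.factorial_succ]
            ring

lemma summable_choose_mul_geom {t : ℝ} (ht : |t| < 1) (k : ℕ) :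
    Summable (fun j : ℕ => (j.choose k : ℝ) * t ^ j) := by
  have h := summable_pow_mul_geometric_of_norm_lt_one (R := ℝ) k
    (r := |t|) (by rwa [Real.norm_eq_abs, abs_abs])
  refine h.of_norm_bounded fun j => ?_
  rw [norm_mul, norm_pow, Real.norm_eq_abs, Real.norm_eq_abs]
  gcongr
  rw [Nat.abs_cast]
  exact_mod_cast Nat.choose_le_pow j k

lemma hasSum_choose_mul_geom {t : ℝ} (ht : |t| < 1) (k : ℕ) :
    HasSum (fun j : ℕ => (j.choose k : ℝ) * t ^ j) (t ^ k / (1 - t) ^ (k + 1)) := by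
  have h1t : (1 : ℝ) - t ≠ 0 := by
    have : t < 1 := lt_of_abs_lt ht
    linarith [this]
  induction k with
  | zero =>
    simpa [div_eq_mul_inv] using hasSum_geometric_of_abs_lt_one ht
  | succ k ih =>
    have hs := summable_choose_mul_geom ht (k + 1)
    set S := ∑' j : ℕ, (j.choose (k+1) : ℝ) * t ^ j with hS
    have hsum : HasSum (fun j : ℕ => (j.choose (k+1) : ℝ) * t ^ j) S := hs.hasSum
    have hshift : HasSum (fun j : ℕ => ((j+1).choose (k+1) : ℝ) * t ^ (j+1)) S := by
      refine (hasSum_nat_add_iff (f := fun j : ℕ => ((j).choose (k+1) : ℝ) * t ^ j) 1).2 ?_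
      simpa [Nat.choose_eq_zero_of_lt (Nat.succ_pos k)] using hsum
    have hsplit : HasSum (fun j : ℕ => ((j.choose k : ℝ) * t ^ j + (j.choose (k+1) : ℝ) * t ^ j) * t) S := by
      refine hshift.congr_fun fun j => ?_
      rw [Nat.choose_succ_succ]
      push_cast
      ring
    have hval : S = t ^ (k+1) / (1 - t) ^ (k + 2) := by
      rcases eq_or_ne t 0 with h | h
      · subst h
        have hs0 : S = 0 := by
          refine hsum.unique ?_
          have he : (fun j : ℕ => (j.choose (k+1) : ℝ) * (0:ℝ) ^ j) = fun _ => (0:ℝ) := by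
            funext j; cases j <;> simp [Nat.choose_eq_zero_of_lt (Nat.succ_pos k)]
          rw [he]
          exact hasSum_zero
        simp [hs0]
      · have h2' : HasSum (fun j : ℕ => ((j.choose k : ℝ) * t ^ j + (j.choose (k+1) : ℝ) * t ^ j)) (S / t) := by
          refine (hsplit.div_const t).congr_fun fun j => ?_
          field_simp
        have hsum2 : HasSum (fun j : ℕ => ((j.choose k : ℝ) * t ^ j + (j.choose (k+1) : ℝ) * t ^ j))
            (t ^ k / (1 - t) ^ (k + 1) + S) := ih.add hsum
        have heq := hsum2.unique h2'
        rw [div_add' _ _ _ (pow_ne_zero _ h1t), div_eq_div_iff (pow_ne_zero _ h1t) h] at heq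
        rw [eq_div_iff (pow_ne_zero _ h1t)]
        linear_combination -heq
    exact hval ▸ hsum


open Real Set Filter Topology Finset

local notation "γ" => Real.eulerMascheroniConstant

noncomputable def lG : ℝ → ℝ := Real.log ∘ Real.Gamma

lemma lG_diff {y : ℝ} (hy : 0 < y) : DifferentiableAt ℝ lG y := by
  refine ((Real.differentiableAt_Gamma ?_).log (Real.Gamma_ne_zero ?_)) <;>
    exact fun m => ne_of_gt (by have h := Nat.cast_nonneg (α := ℝ) m; linarith)

lemma deriv_lG_eq {y : ℝ} (hy : 0 < y) : deriv lG y = digamma y := by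
  unfold lG digamma
  rw [Function.comp_def]
  exact deriv.log
    (Real.differentiableAt_Gamma fun m => ne_of_gt (by have h := Nat.cast_nonneg (α := ℝ) m; linarith))
    (Real.Gamma_ne_zero fun m => ne_of_gt (by have h := Nat.cast_nonneg (α := ℝ) m; linarith))

lemma deriv_lG_rec {y : ℝ} (hy : 0 < y) : deriv lG (y + 1) = deriv lG y + 1 / y := by
  have h_rec : ∀ z : ℝ, 0 < z → lG (z + 1) = lG z + Real.log z := fun z hz => by
    simp only [lG, Function.comp_apply, Real.Gamma_add_one hz.ne',
      Real.log_mul hz.ne' (Real.Gamma_pos_of_pos hz).ne', add_comm]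
  rw [← deriv_comp_add_const, one_div, ← Real.deriv_log,
    ← deriv_add (lG_diff <| by positivity) (Real.differentiableAt_log hy.ne')]
  apply Filter.EventuallyEq.deriv_eq
  filter_upwards [eventually_gt_nhds hy] using h_rec

lemma deriv_lG_nat (N : ℕ) : deriv lG ((N : ℝ) + 1) = -γ + harmonic N := by
  rw [deriv_lG_eq (by positivity), digamma, Real.deriv_Gamma_nat,
    Real.Gamma_nat_eq_factorial]
  field_simp

lemma deriv_lG_mono : MonotoneOn (deriv lG) (Ioi (0:ℝ)) :=
  Real.convexOn_log_Gamma.monotoneOn_deriv fun _ hx => lG_diff hx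

lemma deriv_lG_iterate {x : ℝ} (hx : |x| < 1) (N : ℕ) :
    deriv lG ((N : ℝ) + 1 - x) = deriv lG (1 - x) + ∑ m ∈ range N, 1 / ((m : ℝ) + 1 - x) := by
  have hx1 : x < 1 := lt_of_abs_lt hx
  induction N with
  | zero => simp
  | succ N ih =>
    have h2 : (0 : ℝ) < (N : ℝ) + 1 - x := by
      have : (N : ℝ) ≥ 0 := Nat.cast_nonneg N
      linarith
    have key : deriv lG (((N:ℝ) + 1 - x) + 1) = deriv lG ((N:ℝ) + 1 - x) + 1/((N:ℝ) + 1 - x) :=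
      deriv_lG_rec h2
    push_cast
    rw [show (N:ℝ) + 1 + 1 - x = ((N:ℝ) + 1 - x) + 1 by ring, key, ih, Finset.sum_range_succ]
    push_cast
    ring

lemma harmonic_eq (N : ℕ) : (harmonic N : ℝ) = ∑ m ∈ range N, 1 / ((m : ℝ) + 1) := by
  induction N with
  | zero => simp
  | succ N ih =>
    rw [harmonic_succ, Finset.sum_range_succ, ← ih]
    push_cast
    ring

lemma tendsto_deriv_lG_diff {x : ℝ} (hx : |x| < 1) :
    Tendsto (fun N : ℕ => deriv lG ((N : ℝ) + 1 - x) - deriv lG ((N : ℝ) + 1)) atTop (𝓝 0) := by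
  have hx1 : x < 1 := lt_of_abs_lt hx
  have hx2 : -1 < x := neg_lt_of_abs_lt hx
  have hub : ∀ N : ℕ, 1 ≤ N → deriv lG ((N : ℝ) + 1 - x) - deriv lG ((N : ℝ) + 1) ≤ 1 / ((N:ℝ) + 1) := by
    intro N hN
    have hN1 : (1:ℝ) ≤ (N:ℝ) := by exact_mod_cast hN
    have h1 : deriv lG ((N : ℝ) + 1 - x) ≤ deriv lG ((N : ℝ) + 2) := by
      refine deriv_lG_mono (by rw [Set.mem_Ioi]; linarith) (by rw [Set.mem_Ioi]; linarith) (by linarith)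
    have h2 : deriv lG ((N:ℝ) + 2) = deriv lG ((N:ℝ) + 1) + 1 / ((N:ℝ) + 1) := by
      have h := deriv_lG_rec (y := (N:ℝ) + 1) (by linarith)
      rw [show (N:ℝ) + 2 = (N:ℝ) + 1 + 1 by ring, h]
    linarith
  have hlb : ∀ N : ℕ, 1 ≤ N → -(1 / (N:ℝ)) ≤ deriv lG ((N : ℝ) + 1 - x) - deriv lG ((N : ℝ) + 1) := by
    intro N hN
    have hN1 : (1:ℝ) ≤ (N:ℝ) := by exact_mod_cast hN
    have h1 : deriv lG ((N:ℝ)) ≤ deriv lG ((N : ℝ) + 1 - x) := by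
      refine deriv_lG_mono (by rw [Set.mem_Ioi]; linarith) (by rw [Set.mem_Ioi]; linarith) (by linarith)
    have h2 : deriv lG ((N:ℝ) + 1) = deriv lG ((N:ℝ)) + 1 / (N:ℝ) := deriv_lG_rec (by linarith)
    linarith
  have t1 : Tendsto (fun N : ℕ => -(1 / (N:ℝ))) atTop (𝓝 0) := by
    rw [show (0:ℝ) = -0 by norm_num]
    exact (tendsto_one_div_atTop_nhds_zero_nat).neg
  have t2 : Tendsto (fun N : ℕ => 1 / ((N:ℝ) + 1)) atTop (𝓝 0) :=
    tendsto_one_div_add_atTop_nhds_zero_nat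
  refine tendsto_of_tendsto_of_tendsto_of_le_of_le' t1 t2 ?_ ?_
  · filter_upwards [eventually_ge_atTop 1] with N hN using hlb N hN
  · filter_upwards [eventually_ge_atTop 1] with N hN using hub N hN

lemma summable_digamma_terms {x : ℝ} (hx : |x| < 1) :
    Summable (fun m : ℕ => 1 / ((m : ℝ) + 1 - x) - 1 / ((m : ℝ) + 1)) := by
  have hx1 : x < 1 := lt_of_abs_lt hx
  rw [← summable_nat_add_iff 1]
  have hcmp : Summable (fun m : ℕ => 1 / ((m:ℝ) + 1) ^ 2) := by
    have h : Summable (fun m : ℕ => 1 / (m:ℝ) ^ 2) := by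
      exact_mod_cast summable_one_div_nat_pow.mpr (by norm_num)
    exact ((summable_nat_add_iff 1).mpr h).congr fun m => by push_cast; ring_nf
  refine hcmp.of_norm_bounded fun m => ?_
  have hm0 : (0:ℝ) ≤ (m:ℝ) := Nat.cast_nonneg m
  have hm1 : (0:ℝ) < (m:ℝ) + 1 + 1 - x := by linarith
  have hm2 : (0:ℝ) < (m:ℝ) + 1 + 1 := by linarith
  push_cast
  have key : 1/((m:ℝ) + 1 + 1 - x) - 1/((m:ℝ) + 1 + 1)
      = x / (((m:ℝ) + 1 + 1 - x) * ((m:ℝ) + 1 + 1)) := by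
    field_simp
    ring
  rw [key, Real.norm_eq_abs, abs_div, abs_of_pos (mul_pos hm1 hm2)]
  have h2 : ((m:ℝ) + 1) ^ 2 ≤ ((m:ℝ) + 1 + 1 - x) * ((m:ℝ) + 1 + 1) := by nlinarith
  exact div_le_div₀ zero_le_one hx.le (by positivity) h2

theorem hasSum_digamma_series {x : ℝ} (hx : |x| < 1) :
    HasSum (fun m : ℕ => 1 / ((m : ℝ) + 1 - x) - 1 / ((m : ℝ) + 1))
      (-(digamma (1 - x) + γ)) := by
  have hx1 : x < 1 := lt_of_abs_lt hx
  have hsum := (summable_digamma_terms hx).hasSum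
  have htend := hsum.tendsto_sum_nat
  have hps : ∀ N : ℕ, ∑ m ∈ range N, (1 / ((m : ℝ) + 1 - x) - 1 / ((m : ℝ) + 1))
      = (deriv lG ((N:ℝ) + 1 - x) - deriv lG ((N:ℝ) + 1)) - (deriv lG (1 - x) + γ) := by
    intro N
    rw [Finset.sum_sub_distrib, ← harmonic_eq]
    have hit := deriv_lG_iterate hx N
    have hn := deriv_lG_nat N
    have hsx : ∑ m ∈ range N, 1/((m:ℝ) + 1 - x) = deriv lG ((N:ℝ) + 1 - x) - deriv lG (1 - x) := by
      linarith [hit]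
    rw [hsx, hn]
    ring
  have htend2 : Tendsto (fun N : ℕ => ∑ m ∈ range N, (1 / ((m : ℝ) + 1 - x) - 1 / ((m : ℝ) + 1)))
      atTop (𝓝 (-(deriv lG (1 - x) + γ))) := by
    simp only [hps]
    have := (tendsto_deriv_lG_diff hx).sub_const (deriv lG (1 - x) + γ)
    simpa using this
  have heq : (∑' m : ℕ, (1 / ((m : ℝ) + 1 - x) - 1 / ((m : ℝ) + 1))) = -(deriv lG (1 - x) + γ) :=
    tendsto_nhds_unique htend htend2
  rw [← deriv_lG_eq (by linarith : (0:ℝ) < 1 - x)]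
  exact heq ▸ hsum



set_option maxHeartbeats 1000000

section Assembly

/-- generating function: `∑_j (j+1)^n t^j`. -/
lemma hasSum_pow_succ_mul_geom {t : ℝ} (ht : |t| < 1) (n : ℕ) :
    HasSum (fun j : ℕ => ((j : ℝ) + 1) ^ n * t ^ j)
      (∑ k ∈ Finset.range (n + 1),
        ((stirling2 (n + 1) (k + 1) : ℝ) * (Nat.factorial k : ℝ)) * (t ^ k / (1 - t) ^ (k + 1))) := by
  have h : HasSum (fun j : ℕ => ∑ k ∈ Finset.range (n + 1),
      ((stirling2 (n + 1) (k + 1) : ℝ) * (Nat.factorial k : ℝ)) * ((j.choose k : ℝ) * t ^ j))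
      (∑ k ∈ Finset.range (n + 1),
        ((stirling2 (n + 1) (k + 1) : ℝ) * (Nat.factorial k : ℝ)) * (t ^ k / (1 - t) ^ (k + 1))) :=
    hasSum_sum fun k _ => (hasSum_choose_mul_geom ht k).mul_left _
  refine h.congr_fun fun j => ?_
  have hstep : ∑ k ∈ Finset.range (n + 1),
      ((stirling2 (n + 1) (k + 1) : ℝ) * (Nat.factorial k : ℝ)) * ((j.choose k : ℝ) * t ^ j)
      = (∑ k ∈ Finset.range (n + 1),
        (stirling2 (n + 1) (k + 1) : ℝ) * (Nat.factorial k : ℝ) * (j.choose k : ℝ)) * t ^ j := by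
    rw [Finset.sum_mul]
    exact Finset.sum_congr rfl fun k _ => by ring
  have hc : ((j : ℝ) + 1) ^ n = ∑ k ∈ Finset.range (n + 1),
      (stirling2 (n + 1) (k + 1) : ℝ) * (Nat.factorial k : ℝ) * (j.choose k : ℝ) := by
    exact_mod_cast congrArg (Nat.cast : ℕ → ℝ) (pow_eq_sum_stirling n j)
  rw [hstep, ← hc]

lemma summable_zeta_aux (s : ℕ) (hs : 2 ≤ s) : Summable (fun m : ℕ => 1 / ((m:ℝ) + 1) ^ s) := by
  have h : Summable (fun m : ℕ => 1 / (m:ℝ) ^ s) := summable_one_div_nat_pow.mpr hs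
  exact ((summable_nat_add_iff 1).mpr h).congr fun m => by push_cast; ring_nf

lemma hasSum_zetaNat (s : ℕ) (hs : 2 ≤ s) :
    HasSum (fun m : ℕ => 1 / ((m:ℝ) + 1) ^ s) (zetaNat s) := (summable_zeta_aux s hs).hasSum

lemma summable_hurwitz_aux {x : ℝ} (hx : |x| < 1) (k : ℕ) :
    Summable (fun m : ℕ => 1 / ((m:ℝ) + 1 - x) ^ (k + 2)) := by
  have hx1 : x < 1 := lt_of_abs_lt hx
  rw [← summable_nat_add_iff 1]
  refine (summable_zeta_aux 2 le_rfl).of_norm_bounded fun m => ?_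
  have hm0 : (0:ℝ) ≤ (m:ℝ) := Nat.cast_nonneg m
  have h3 : (0:ℝ) < ((m:ℝ) + 1 + 1 - x) := by linarith
  push_cast
  rw [Real.norm_eq_abs, abs_of_pos (by positivity)]
  apply one_div_le_one_div_of_le (by positivity)
  calc ((m:ℝ) + 1) ^ 2 ≤ ((m:ℝ) + 1 + 1 - x) ^ 2 := by gcongr; linarith
    _ ≤ ((m:ℝ) + 1 + 1 - x) ^ (k + 2) := by
        apply pow_le_pow_right₀ (by linarith) (by omega)

lemma hasSum_hurwitz {x : ℝ} (hx : |x| < 1) (k : ℕ) :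
    HasSum (fun m : ℕ => 1 / ((m:ℝ) + 1 - x) ^ (k + 2)) (hurwitzZetaNat (k + 2) (1 - x)) := by
  have h := (summable_hurwitz_aux hx k).hasSum
  have he : hurwitzZetaNat (k + 2) (1 - x) = ∑' m : ℕ, 1 / ((m:ℝ) + 1 - x) ^ (k + 2) := by
    unfold hurwitzZetaNat
    exact tsum_congr fun m => by rw [show (m:ℝ) + (1 - x) = (m:ℝ) + 1 - x by ring]
  rw [he]
  exact h

/-- row sum for fixed m -/
lemma hasSum_row {x : ℝ} (hx : |x| < 1) (n m : ℕ) :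
    HasSum (fun k : ℕ => ((k : ℝ) + 2) ^ n * x ^ (k + 1) * (1 / ((m:ℝ) + 1) ^ (k + 2)))
      ((1 / ((m:ℝ) + 1 - x) - 1 / ((m:ℝ) + 1)) +
        ∑ k ∈ Finset.Icc 1 n, (stirling2 (n + 1) (k + 1) : ℝ) * (Nat.factorial k : ℝ) *
          x ^ k / ((m:ℝ) + 1 - x) ^ (k + 1)) := by
  have hx1 : x < 1 := lt_of_abs_lt hx
  have hm0 : (0:ℝ) ≤ (m:ℝ) := Nat.cast_nonneg m
  have hm1 : (0:ℝ) < (m:ℝ) + 1 := by linarith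
  have hmx : (0:ℝ) < (m:ℝ) + 1 - x := by linarith
  set t : ℝ := x / ((m:ℝ) + 1) with htdef
  have ht : |t| < 1 := by
    rw [htdef, abs_div, abs_of_pos hm1, div_lt_one hm1]
    calc |x| < 1 := hx
      _ ≤ (m:ℝ) + 1 := by linarith
  set T : ℝ := ∑ k ∈ Finset.range (n + 1),
      ((stirling2 (n + 1) (k + 1) : ℝ) * (Nat.factorial k : ℝ)) * (t ^ k / (1 - t) ^ (k + 1)) with hT
  have h1 := hasSum_pow_succ_mul_geom ht n
  have h2 : HasSum (fun k : ℕ => ((k : ℝ) + 2) ^ n * t ^ (k + 1)) (T - 1) := by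
    have hs' : HasSum (fun j : ℕ => (((j + 1 : ℕ) : ℝ) + 1) ^ n * t ^ (j + 1)) (T - 1) := by
      refine (hasSum_nat_add_iff (f := fun j : ℕ => ((j : ℝ) + 1) ^ n * t ^ j) 1).2 ?_
      simpa using h1
    refine hs'.congr_fun fun k => ?_
    push_cast
    ring_nf
  have h3 : HasSum (fun k : ℕ => ((k : ℝ) + 2) ^ n * t ^ (k + 1) * (1 / ((m:ℝ) + 1)))
      ((T - 1) * (1 / ((m:ℝ) + 1))) := h2.mul_right _
  have hfun : (fun k : ℕ => ((k : ℝ) + 2) ^ n * t ^ (k + 1) * (1 / ((m:ℝ) + 1)))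
      = fun k : ℕ => ((k : ℝ) + 2) ^ n * x ^ (k + 1) * (1 / ((m:ℝ) + 1) ^ (k + 2)) := by
    funext k
    rw [htdef, div_pow]
    rw [show k + 2 = (k + 1) + 1 by ring, pow_succ ((m:ℝ) + 1) (k + 1)]
    field_simp
  have hIcc : ∑ k ∈ Finset.Icc 1 n, (stirling2 (n + 1) (k + 1) : ℝ) * (Nat.factorial k : ℝ)
      * x ^ k / ((m:ℝ) + 1 - x) ^ (k + 1)
      = ∑ k ∈ Finset.range n, (stirling2 (n + 1) (k + 1 + 1) : ℝ) * (Nat.factorial (k + 1) : ℝ)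
      * x ^ (k + 1) / ((m:ℝ) + 1 - x) ^ (k + 1 + 1) := by
    rw [← Finset.Ico_add_one_right_eq_Icc, Finset.sum_Ico_eq_sum_range]
    norm_num
    exact Finset.sum_congr rfl fun k _ => by rw [add_comm 1 k]
  have hval : (T - 1) * (1 / ((m:ℝ) + 1)) = (1 / ((m:ℝ) + 1 - x) - 1 / ((m:ℝ) + 1)) +
      ∑ k ∈ Finset.Icc 1 n, (stirling2 (n + 1) (k + 1) : ℝ) * (Nat.factorial k : ℝ)
        * x ^ k / ((m:ℝ) + 1 - x) ^ (k + 1) := by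
    have hTm : T * (1 / ((m:ℝ) + 1)) = ∑ k ∈ Finset.range (n + 1),
        (stirling2 (n + 1) (k + 1) : ℝ) * (Nat.factorial k : ℝ) * x ^ k / ((m:ℝ) + 1 - x) ^ (k + 1) := by
      rw [hT, Finset.sum_mul]
      refine Finset.sum_congr rfl fun k _ => ?_
      rw [htdef, div_pow, show (1 : ℝ) - x / ((m:ℝ) + 1) = ((m:ℝ) + 1 - x)/((m:ℝ) + 1) by
        field_simp, div_pow]
      field_simp
      ring
    have hsplit : ∑ k ∈ Finset.range (n + 1),
        (stirling2 (n + 1) (k + 1) : ℝ) * (Nat.factorial k : ℝ) * x ^ k / ((m:ℝ) + 1 - x) ^ (k + 1)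
        = 1 / ((m:ℝ) + 1 - x) + ∑ k ∈ Finset.Icc 1 n,
          (stirling2 (n + 1) (k + 1) : ℝ) * (Nat.factorial k : ℝ) * x ^ k / ((m:ℝ) + 1 - x) ^ (k + 1) := by
      rw [Finset.sum_range_succ' (fun k => (stirling2 (n + 1) (k + 1) : ℝ) * (Nat.factorial k : ℝ)
        * x ^ k / ((m:ℝ) + 1 - x) ^ (k + 1)) n, hIcc, stirling2_one n]
      simp [Nat.factorial]
      ring
    rw [sub_mul, hTm, hsplit, one_mul]
    ring
  rw [hfun, hval] at h3
  exact h3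

/-- summability over pairs -/
lemma summable_F {x : ℝ} (hx : |x| < 1) (n : ℕ) :
    Summable (fun p : ℕ × ℕ => ((p.1 : ℝ) + 2) ^ n * x ^ (p.1 + 1) * (1 / ((p.2:ℝ) + 1) ^ (p.1 + 2))) := by
  have hg : Summable (fun k : ℕ => (2:ℝ) ^ n * (((k:ℝ) + 1) ^ n * |x| ^ (k + 1))) := by
    apply Summable.mul_left
    have h := summable_pow_mul_geometric_of_norm_lt_one (R := ℝ) n
      (r := |x|) (by rwa [Real.norm_eq_abs, abs_abs])
    have h2 := (summable_nat_add_iff 1).mpr h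
    exact h2.congr fun k => by push_cast; ring
  have hh : Summable (fun m : ℕ => 1 / ((m:ℝ) + 1) ^ 2) := summable_zeta_aux 2 le_rfl
  have hprod : Summable (fun p : ℕ × ℕ =>
      ((2:ℝ) ^ n * (((p.1:ℝ) + 1) ^ n * |x| ^ (p.1 + 1))) * (1 / ((p.2:ℝ) + 1) ^ 2)) :=
    hg.mul_of_nonneg hh (fun k => by positivity) (fun m => by positivity)
  refine hprod.of_norm_bounded fun p => ?_
  obtain ⟨k, m⟩ := p
  have hm0 : (0:ℝ) ≤ (m:ℝ) := Nat.cast_nonneg m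
  have hk0 : (0:ℝ) ≤ (k:ℝ) := Nat.cast_nonneg k
  simp only [Real.norm_eq_abs]
  rw [abs_mul, abs_mul, abs_pow, abs_pow, abs_of_nonneg (by linarith : (0:ℝ) ≤ (k:ℝ) + 2),
    abs_of_pos (by positivity : (0:ℝ) < 1 / ((m:ℝ) + 1) ^ (k + 2))]
  have b1 : ((k:ℝ) + 2) ^ n * |x| ^ (k + 1) ≤ (2:ℝ) ^ n * (((k:ℝ) + 1) ^ n * |x| ^ (k + 1)) := by
    rw [← mul_assoc, ← mul_pow]
    have : ((k:ℝ) + 2) ^ n ≤ ((2:ℝ) * ((k:ℝ) + 1)) ^ n := by gcongr <;> linarith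
    exact mul_le_mul_of_nonneg_right this (by positivity)
  have b2 : (1:ℝ) / ((m:ℝ) + 1) ^ (k + 2) ≤ 1 / ((m:ℝ) + 1) ^ 2 := by
    apply one_div_le_one_div_of_le (by positivity)
    apply pow_le_pow_right₀ (by linarith) (by omega)
  exact mul_le_mul b1 b2 (by positivity) (by positivity)

end Assembly

theorem sum_zeta_mul_pow_mul_pow (n : ℕ) (x : ℝ) (hx : |x| < 1) :
    HasSum (fun k : ℕ => zetaNat (k + 2) * ((k : ℝ) + 2) ^ n * x ^ (k + 1))
      (-(digamma (1 - x) + Real.eulerMascheroniConstant) +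
        ∑ k ∈ Finset.Icc 1 n,
          (stirling2 (n + 1) (k + 1) : ℝ) * (Nat.factorial k : ℝ) *
            hurwitzZetaNat (k + 1) (1 - x) * x ^ k) := by
  classical
  set F : ℕ × ℕ → ℝ := fun p => ((p.1 : ℝ) + 2) ^ n * x ^ (p.1 + 1) * (1 / ((p.2:ℝ) + 1) ^ (p.1 + 2))
    with hFdef
  have hsumF := summable_F hx n
  have hS : HasSum F (∑' p, F p) := hsumF.hasSum
  -- column sums give the LHS
  have hcol : ∀ k : ℕ, HasSum (fun m : ℕ => F (k, m))
      (zetaNat (k + 2) * ((k : ℝ) + 2) ^ n * x ^ (k + 1)) := by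
    intro k
    have h := (hasSum_zetaNat (k + 2) (by omega)).mul_left (((k : ℝ) + 2) ^ n * x ^ (k + 1))
    rw [show zetaNat (k + 2) * ((k : ℝ) + 2) ^ n * x ^ (k + 1)
      = (((k : ℝ) + 2) ^ n * x ^ (k + 1)) * zetaNat (k + 2) by ring]
    refine h.congr_fun fun m => ?_
    simp only [hFdef]
  have hLHS : HasSum (fun k : ℕ => zetaNat (k + 2) * ((k : ℝ) + 2) ^ n * x ^ (k + 1)) (∑' p, F p) :=
    hS.prod_fiberwise hcol
  -- row sums
  have hswap : HasSum (fun p : ℕ × ℕ => F (p.2, p.1)) (∑' p, F p) := by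
    have := ((Equiv.prodComm ℕ ℕ).hasSum_iff (f := F) (a := ∑' p, F p)).2 hS
    exact this.congr_fun fun p => rfl
  set R : ℕ → ℝ := fun m => (1 / ((m:ℝ) + 1 - x) - 1 / ((m:ℝ) + 1)) +
      ∑ k ∈ Finset.Icc 1 n, (stirling2 (n + 1) (k + 1) : ℝ) * (Nat.factorial k : ℝ) *
        x ^ k / ((m:ℝ) + 1 - x) ^ (k + 1) with hRdef
  have hrow : ∀ m : ℕ, HasSum (fun k : ℕ => F (k, m)) (R m) := fun m => hasSum_row hx n m
  have hRS : HasSum R (∑' p, F p) := hswap.prod_fiberwise hrow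
  -- evaluate the sum of R
  have hpart2 : HasSum (fun m : ℕ => ∑ k ∈ Finset.Icc 1 n,
      (stirling2 (n + 1) (k + 1) : ℝ) * (Nat.factorial k : ℝ) * x ^ k / ((m:ℝ) + 1 - x) ^ (k + 1))
      (∑ k ∈ Finset.Icc 1 n, (stirling2 (n + 1) (k + 1) : ℝ) * (Nat.factorial k : ℝ) *
        hurwitzZetaNat (k + 1) (1 - x) * x ^ k) := by
    refine hasSum_sum fun k hk => ?_
    have hk1 : 1 ≤ k := (Finset.mem_Icc.mp hk).1
    obtain ⟨j, rfl⟩ : ∃ j, k = j + 1 := ⟨k - 1, by omega⟩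
    have h := (hasSum_hurwitz hx j).mul_left
      ((stirling2 (n + 1) (j + 1 + 1) : ℝ) * (Nat.factorial (j + 1) : ℝ) * x ^ (j + 1))
    rw [show (stirling2 (n + 1) (j + 1 + 1) : ℝ) * (Nat.factorial (j + 1) : ℝ) *
        hurwitzZetaNat (j + 1 + 1) (1 - x) * x ^ (j + 1)
      = ((stirling2 (n + 1) (j + 1 + 1) : ℝ) * (Nat.factorial (j + 1) : ℝ) * x ^ (j + 1)) *
        hurwitzZetaNat (j + 2) (1 - x) by ring]
    refine h.congr_fun fun m => ?_
    rw [show j + 1 + 1 = j + 2 by ring]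
    ring
  have hRval : HasSum R (-(digamma (1 - x) + Real.eulerMascheroniConstant) +
      ∑ k ∈ Finset.Icc 1 n, (stirling2 (n + 1) (k + 1) : ℝ) * (Nat.factorial k : ℝ) *
        hurwitzZetaNat (k + 1) (1 - x) * x ^ k) :=
    (hasSum_digamma_series hx).add hpart2
  have hfinal := hRval.unique hRS
  rw [← hfinal] at hLHS
  exact hLHS
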